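/- If f : X → Y is a quasisymmetric homeomorphism between metric spaces, then dim_N X = dim_N Y; i.e., the Nagata dimension is a quasisymmetry invariant. -/

import Mathlib

open Metric Set

/-- `X` has Nagata dimension at most `n` (witnessed by some constant `c > 0`):
for every `s > 0` there is a covering by sets of diameter `≤ c * s` such that every
set of diameter `≤ s` meets at most `n + 1` members of the covering. -/
def NagataProp (X : Type*) [MetricSpace X] (n : ℕ) : Prop :=
  ∃ c : ℝ, 0 < c ∧ ∀ s : ℝ, 0 < s → ∃ 𝓑 : Set (Set X),
    (⋃₀ 𝓑 = univ) ∧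
    (∀ B ∈ 𝓑, EMetric.diam B ≤ ENNReal.ofReal (c * s)) ∧
    (∀ E : Set X, EMetric.diam E ≤ ENNReal.ofReal s →
      ∃ T : Finset (Set X), T.card ≤ n + 1 ∧
        ∀ B ∈ 𝓑, (B ∩ E).Nonempty → B ∈ T)

/-- The Nagata (Assouad–Nagata) dimension of a metric space, as an element of `ℕ∞`. -/
noncomputable def nagataDim (X : Type*) [MetricSpace X] : ℕ∞ :=
  sInf {k : ℕ∞ | ∃ n : ℕ, k = n ∧ NagataProp X n}

lemma dist_le_of_ediam_le' {α : Type*} [PseudoMetricSpace α] {A : Set α} {s : ℝ}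
    (hs : 0 ≤ s) (h : EMetric.diam A ≤ ENNReal.ofReal s) {u v : α}
    (hu : u ∈ A) (hv : v ∈ A) : dist u v ≤ s := by
  have h1 : edist u v ≤ ENNReal.ofReal s := (EMetric.edist_le_diam_of_mem hu hv).trans h
  rw [edist_dist] at h1
  exact (ENNReal.ofReal_le_ofReal_iff hs).1 h1

lemma ediam_le_ofReal_of_dist_le {α : Type*} [PseudoMetricSpace α] {A : Set α} {s : ℝ}
    (h : ∀ u ∈ A, ∀ v ∈ A, dist u v ≤ s) : EMetric.diam A ≤ ENNReal.ofReal s :=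
  EMetric.diam_le fun u hu v hv => by
    rw [edist_dist]; exact ENNReal.ofReal_le_ofReal (h u hu v hv)

set_option maxHeartbeats 1000000 in
theorem nagata_transfer {X Y : Type*} [MetricSpace X] [MetricSpace Y]
    (f : X → Y) (hfi : Function.Injective f) (hfs : Function.Surjective f)
    (θ : ℝ → ℝ) (hθpos : ∀ t : ℝ, 0 < t → 0 < θ t)
    (hθsmall : ∀ K : ℝ, 0 < K → ∃ t : ℝ, 0 < t ∧ θ t ≤ K)
    (hqs : ∀ (x x' z : X) (t : ℝ), 0 < t →
      dist x z ≤ t * dist x' z → dist (f x) (f z) ≤ θ t * dist (f x') (f z))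
    (n : ℕ) (h : NagataProp X n) : NagataProp Y n := by
  classical
  obtain ⟨c₀, hc₀pos, hcov₀⟩ := h
  obtain ⟨c, hc1, hcc₀⟩ : ∃ c : ℝ, 1 ≤ c ∧ c₀ ≤ c :=
    ⟨max c₀ 1, le_max_right _ _, le_max_left _ _⟩
  have hcpos : (0:ℝ) < c := by linarith
  obtain ⟨Λn, Λ, hΛeq, hΛ2c, hΛn1⟩ :
      ∃ (Λn : ℕ) (Λ : ℝ), Λ = (Λn : ℝ) ∧ 2*c + 4 ≤ Λ ∧ 1 < Λn := by
    refine ⟨⌈2*c⌉₊ + 4, ((⌈2*c⌉₊ + 4 : ℕ) : ℝ), rfl, ?_, by omega⟩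
    have h1 := Nat.le_ceil (2*c)
    push_cast
    linarith
  have hΛ4 : (4:ℝ) ≤ Λ := by linarith
  have hΛ1 : (1:ℝ) < Λ := by linarith
  have hΛpos : (0:ℝ) < Λ := by linarith
  have hzpos : ∀ j : ℤ, (0:ℝ) < Λ^j := fun j => zpow_pos hΛpos j
  have hzsucc : ∀ j : ℤ, Λ^(j+1) = Λ^j * Λ := fun j => zpow_add_one₀ (ne_of_gt hΛpos) j
  obtain ⟨a, hapos, haprod⟩ : ∃ a : ℝ, 0 < a ∧ a * (2*c+6) = 1 :=
    ⟨1/(2*c+6), by positivity, by field_simp⟩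
  have ha8 : a ≤ 1/8 := by nlinarith
  have hca : c * a ≤ 1/2 := by nlinarith
  obtain ⟨ε, hεpos, hεeq⟩ : ∃ ε : ℝ, 0 < ε ∧ 4*ε*Λ = a := by
    refine ⟨a/(4*Λ), by positivity, by field_simp⟩
  have hε1 : ε ≤ 1 := by nlinarith
  have h2ε : (0:ℝ) < 2/ε := by positivity
  obtain ⟨δ, hδeq⟩ : ∃ δ : ℝ, δ = 2*θ (2/ε) := ⟨_, rfl⟩
  have hθ2ε : 0 < θ (2/ε) := hθpos _ h2ε
  have hδpos : 0 < δ := by rw [hδeq]; linarith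
  refine ⟨δ, hδpos, fun s hs => ?_⟩
  by_cases htriv : ∀ y₁ y₂ : Y, dist y₁ y₂ ≤ δ * s
  · refine ⟨{univ}, by simp, ?_, ?_⟩
    · intro B hB
      simp only [mem_singleton_iff] at hB
      subst hB
      exact ediam_le_ofReal_of_dist_le (fun u _ v _ => htriv u v)
    · intro E hE
      refine ⟨{univ}, by simp, fun B hB _ => ?_⟩
      simp only [mem_singleton_iff] at hB
      simp [hB]
  push_neg at htriv
  obtain ⟨y₁, y₂, hy12⟩ := htriv
  -- choose covers at all scales
  have hcovk : ∀ k : ℤ, ∃ 𝓑 : Set (Set X), (⋃₀ 𝓑 = univ) ∧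
      (∀ B ∈ 𝓑, ∀ u ∈ B, ∀ v ∈ B, dist u v ≤ c * (a * Λ^k)) ∧
      (∀ E : Set X, EMetric.diam E ≤ ENNReal.ofReal (a*Λ^k) →
        ∃ T : Finset (Set X), T.card ≤ n + 1 ∧ ∀ B ∈ 𝓑, (B ∩ E).Nonempty → B ∈ T) := by
    intro k
    have hσ : 0 < a * Λ^k := mul_pos hapos (hzpos k)
    obtain ⟨𝓑, h1, h2, h3⟩ := hcov₀ _ hσ
    refine ⟨𝓑, h1, fun B hB u hu v hv => ?_, h3⟩
    have hd := dist_le_of_ediam_le' (by nlinarith) (h2 B hB) hu hv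
    nlinarith
  choose 𝓑 hB1 hB2 hB3 using hcovk
  -- the scale function R
  have hRex : ∃ R : X → ℝ, (∀ x, 0 < R x) ∧
      (∀ x r, r < R x → ∀ z w : X, dist z x < r → dist w x < r →
        dist (f z) (f w) ≤ δ * s) ∧
      (∀ x, ∃ z w : X, dist z x < 2 * R x ∧ dist w x < 2 * R x ∧
        δ * s < dist (f z) (f w)) ∧
      (∀ x y : X, R x ≤ R y + dist x y) := by
    set S : X → Set ℝ := fun x =>
      {r | 0 < r ∧ ∀ z w : X, dist z x < r → dist w x < r → dist (f z) (f w) ≤ δ * s}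
      with hSdef
    have hSne : ∀ x, (S x).Nonempty := by
      intro x
      have hxx : ∃ p : X, p ≠ x := by
        by_contra hcon
        push_neg at hcon
        obtain ⟨x₁, hx₁⟩ := hfs y₁
        obtain ⟨x₂, hx₂⟩ := hfs y₂
        have hyy : y₁ = y₂ := by rw [← hx₁, ← hx₂, hcon x₁, hcon x₂]
        rw [hyy, dist_self] at hy12
        nlinarith
      obtain ⟨p, hp⟩ := hxx
      have hd₀ : 0 < dist p x := dist_pos.2 hp
      have hK : 0 < dist (f p) (f x) := dist_pos.2 (fun hh => hp (hfi hh))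
      have hδs2 : 0 < δ*s/2 := by positivity
      obtain ⟨t₁, ht₁pos, ht₁⟩ := hθsmall ((δ*s/2) / dist (f p) (f x)) (by positivity)
      have hθK : θ t₁ * dist (f p) (f x) ≤ δ*s/2 := by
        rw [← le_div_iff₀ hK]; exact ht₁
      refine ⟨t₁ * dist p x, by positivity, ?_⟩
      intro z w hz hw
      have hbz : dist (f z) (f x) ≤ δ*s/2 := by
        have := hqs z p x t₁ ht₁pos (by linarith)
        linarith
      have hbw : dist (f w) (f x) ≤ δ*s/2 := by
        have := hqs w p x t₁ ht₁pos (by linarith)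
        linarith
      calc dist (f z) (f w) ≤ dist (f z) (f x) + dist (f w) (f x) := dist_triangle_right _ _ _
        _ ≤ δ * s := by linarith
    have hSbdd : ∀ x, BddAbove (S x) := by
      intro x
      obtain ⟨p₁, hp₁⟩ := hfs y₁
      obtain ⟨p₂, hp₂⟩ := hfs y₂
      refine ⟨max (dist p₁ x) (dist p₂ x) + 1, fun r hr => ?_⟩
      by_contra hcon
      push_neg at hcon
      have h1 : dist p₁ x < r := by
        have := le_max_left (dist p₁ x) (dist p₂ x); linarith
      have h2 : dist p₂ x < r := by
        have := le_max_right (dist p₁ x) (dist p₂ x); linarith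
      have := hr.2 p₁ p₂ h1 h2
      rw [hp₁, hp₂] at this
      linarith
    refine ⟨fun x => sSup (S x), ?_, ?_, ?_, ?_⟩
    · intro x
      obtain ⟨r, hr⟩ := hSne x
      exact lt_of_lt_of_le hr.1 (le_csSup (hSbdd x) hr)
    · intro x r hr z w hz hw
      obtain ⟨r', hr'S, hrr'⟩ := exists_lt_of_lt_csSup (hSne x) hr
      exact hr'S.2 z w (lt_trans hz hrr') (lt_trans hw hrr')
    · intro x
      have hRx : 0 < sSup (S x) := by
        obtain ⟨r, hr⟩ := hSne x
        exact lt_of_lt_of_le hr.1 (le_csSup (hSbdd x) hr)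
      by_contra hcon
      push_neg at hcon
      have hmem : 2 * sSup (S x) ∈ S x := ⟨by linarith, fun z w hz hw => hcon z w hz hw⟩
      have := le_csSup (hSbdd x) hmem
      linarith
    · intro x y
      apply csSup_le (hSne x)
      intro r hr
      rcases le_or_gt r (dist x y) with hle | hlt
      · have hRy : 0 < sSup (S y) := by
          obtain ⟨r', hr'⟩ := hSne y
          exact lt_of_lt_of_le hr'.1 (le_csSup (hSbdd y) hr')
        linarith
      · have hmem : r - dist x y ∈ S y := by
          refine ⟨by linarith, fun z w hz hw => hr.2 z w ?_ ?_⟩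
          · calc dist z x ≤ dist z y + dist y x := dist_triangle _ _ _
              _ < (r - dist x y) + dist x y := by rw [dist_comm y x]; linarith
              _ = r := by ring
          · calc dist w x ≤ dist w y + dist y x := dist_triangle _ _ _
              _ < (r - dist x y) + dist x y := by rw [dist_comm y x]; linarith
              _ = r := by ring
        have := le_csSup (hSbdd y) hmem
        linarith
  obtain ⟨R, hRpos, hΦ, hΦnot, hRlip⟩ := hRex
  have hPull : ∀ u v : X, dist (f u) (f v) ≤ s → dist u v ≤ ε * R u := by
    intro u v huv
    by_contra hcon
    push_neg at hcon
    obtain ⟨z, w, hz, hw, hzw⟩ := hΦnot u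
    have hvu : dist v u = dist u v := dist_comm v u
    have he1 : (2/ε)*(ε*R u) = 2*R u := by field_simp
    have hkey : 2 * R u ≤ (2/ε) * dist v u := by
      rw [← he1]
      apply mul_le_mul_of_nonneg_left _ h2ε.le
      rw [hvu]; linarith
    have hz' := hqs z v u (2/ε) h2ε (by linarith)
    have hw' := hqs w v u (2/ε) h2ε (by linarith)
    have hfv : dist (f v) (f u) ≤ s := by rw [dist_comm]; exact huv
    have hfvnn : 0 ≤ dist (f v) (f u) := dist_nonneg
    have hb : dist (f z) (f w) ≤ δ * s := by
      calc dist (f z) (f w) ≤ dist (f z) (f u) + dist (f w) (f u) := dist_triangle_right _ _ _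
        _ ≤ θ (2/ε) * dist (f v) (f u) + θ (2/ε) * dist (f v) (f u) := add_le_add hz' hw'
        _ = δ * dist (f v) (f u) := by rw [hδeq]; ring
        _ ≤ δ * s := mul_le_mul_of_nonneg_left hfv hδpos.le
    linarith

  -- bands
  obtain ⟨band, hband1, hband2⟩ :
      ∃ band : X → ℤ, (∀ x, Λ^(band x) ≤ R x) ∧ (∀ x, R x < Λ^(band x + 1)) := by
    refine ⟨fun x => Int.log Λn (R x), fun x => ?_, fun x => ?_⟩
    · rw [hΛeq]; exact Int.zpow_log_le_self hΛn1 (hRpos x)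
    · rw [hΛeq]; exact Int.lt_zpow_succ_log_self hΛn1 (R x)
  have hbandge : ∀ (x : X) (j : ℤ), Λ^j ≤ R x → j ≤ band x := by
    intro x j hj
    have h2 : Λ^j < Λ^(band x + 1) := lt_of_le_of_lt hj (hband2 x)
    have := (zpow_lt_zpow_iff_right₀ hΛ1).1 h2
    omega
  have hbandlt : ∀ (x : X) (j : ℤ), R x < Λ^j → band x < j := by
    intro x j hj
    have h2 : Λ^(band x) < Λ^j := lt_of_le_of_lt (hband1 x) hj
    exact (zpow_lt_zpow_iff_right₀ hΛ1).1 h2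
  set Xb : ℤ → Set X := fun k => {x | band x = k} with hXbdef
  set pieces : ℤ → Set (Set X) := fun k => {P | ∃ B ∈ 𝓑 k, P = B ∩ Xb k ∧ P.Nonempty}
    with hpiecesdef
  set Ab : ℤ → Set X → Prop := fun k P =>
    ∃ M ∈ pieces (k+1), ∃ p ∈ P, ∃ m ∈ M, dist p m ≤ a * Λ^k with hAbdef
  obtain ⟨par, hpar1, hpar2⟩ : ∃ par : ℤ → Set X → Set X,
      (∀ k P, Ab k P → par k P ∈ pieces (k+1)) ∧
      (∀ k P, Ab k P → ∃ p ∈ P, ∃ m ∈ par k P, dist p m ≤ a * Λ^k) := by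
    refine ⟨fun k P => if h : Ab k P then h.choose else ∅, fun k P h => ?_, fun k P h => ?_⟩
    · show (if h : Ab k P then h.choose else ∅) ∈ pieces (k+1)
      rw [dif_pos h]; exact h.choose_spec.1
    · show ∃ p ∈ P, ∃ m ∈ (if h : Ab k P then h.choose else ∅), dist p m ≤ a * Λ ^ k
      rw [dif_pos h]
      obtain ⟨hmem, p, hp, m, hm, hd⟩ := h.choose_spec
      exact ⟨p, hp, m, hm, hd⟩
  set Dp : ℤ → Set X → Set X := fun k P =>
    P ∪ ⋃₀ {Q | Q ∈ pieces k ∧ Ab k Q ∧ par k Q = P} with hDpdef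
  set 𝓓 : Set (Set X) := {D' | ∃ k P, P ∈ pieces (k+1) ∧ ¬ Ab (k+1) P ∧ D' = Dp k P}
    with h𝓓def
  -- basic piece facts
  have hpiecene : ∀ (k : ℤ) P, P ∈ pieces k → P.Nonempty := by
    intro k P hP; obtain ⟨B, hB, rfl, hne⟩ := hP; exact hne
  have hpieceband : ∀ (k : ℤ) P, P ∈ pieces k → ∀ x ∈ P, band x = k := by
    intro k P hP x hx; obtain ⟨B, hB, rfl, hne⟩ := hP; exact hx.2
  have hpiecedist : ∀ (k : ℤ) P, P ∈ pieces k → ∀ u ∈ P, ∀ v ∈ P, dist u v ≤ c*(a*Λ^k) := by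
    intro k P hP u hu v hv; obtain ⟨B, hB, rfl, hne⟩ := hP; exact hB2 k B hB u hu.1 v hv.1
  have hRlow : ∀ (k : ℤ) P, P ∈ pieces k → ∀ x ∈ P, Λ^k ≤ R x := by
    intro k P hP x hx
    have hb := hpieceband k P hP x hx; rw [← hb]; exact hband1 x
  have hRhigh : ∀ (k : ℤ) P, P ∈ pieces k → ∀ x ∈ P, R x < Λ^(k+1) := by
    intro k P hP x hx
    have hb := hpieceband k P hP x hx; rw [← hb]; exact hband2 x
  -- the parent of an absorbed piece is itself not absorbed
  have hparnabs : ∀ (k : ℤ) P, P ∈ pieces k → Ab k P → ¬ Ab (k+1) (par k P) := by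
    intro k P hP hab hcon
    obtain ⟨q₁, hq₁, m₁, hm₁, hd1⟩ := hpar2 k P hab
    have hMp := hpar1 k P hab
    obtain ⟨W, hW, m₂, hm₂, w₁, hw₁, hd2⟩ := hcon
    have hRw : Λ^(k+1+1) ≤ R w₁ := hRlow _ _ hW w₁ hw₁
    have hRq : R q₁ < Λ^(k+1) := hRhigh _ _ hP q₁ hq₁
    have hdm : dist m₁ m₂ ≤ c*(a*Λ^(k+1)) := hpiecedist _ _ hMp m₁ hm₁ m₂ hm₂
    have hlip : R w₁ ≤ R q₁ + dist w₁ q₁ := hRlip w₁ q₁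
    have htri : dist w₁ q₁ ≤ dist m₂ w₁ + dist m₁ m₂ + dist q₁ m₁ := by
      calc dist w₁ q₁ ≤ dist w₁ m₁ + dist m₁ q₁ := dist_triangle _ _ _
        _ ≤ (dist w₁ m₂ + dist m₂ m₁) + dist m₁ q₁ := by linarith [dist_triangle w₁ m₂ m₁]
        _ = dist m₂ w₁ + dist m₁ m₂ + dist q₁ m₁ := by
            rw [dist_comm w₁ m₂, dist_comm m₂ m₁, dist_comm m₁ q₁]
    have e1 : Λ^(k+1+1) = Λ^(k+1)*Λ := hzsucc _
    have e2 : Λ^(k+1) = Λ^k*Λ := hzsucc _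
    have hT := hzpos k
    rw [e1] at hRw
    rw [e2] at hRw hRq hdm
    nlinarith [mul_pos hT hΛpos, mul_le_mul_of_nonneg_right ha8 (mul_pos hT hΛpos).le,
      mul_le_mul_of_nonneg_right hca (mul_pos hT hΛpos).le,
      mul_le_mul_of_nonneg_right ha8 hT.le,
      mul_le_mul_of_nonneg_left hΛ4 (mul_pos hT hΛpos).le]
  have hDin : ∀ (k : ℤ) P, P ∈ pieces (k+1) → ¬ Ab (k+1) P → Dp k P ∈ 𝓓 :=
    fun k P h1 h2 => ⟨k, P, h1, h2, rfl⟩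
  have hcover : ∀ x : X, ∃ D' ∈ 𝓓, x ∈ D' := by
    intro x
    have hx : x ∈ ⋃₀ 𝓑 (band x) := by rw [hB1 (band x)]; exact mem_univ x
    obtain ⟨B, hB, hxB⟩ := hx
    have hxP : x ∈ B ∩ Xb (band x) := ⟨hxB, rfl⟩
    have hPp : (B ∩ Xb (band x)) ∈ pieces (band x) := ⟨B, hB, rfl, ⟨x, hxP⟩⟩
    by_cases hab : Ab (band x) (B ∩ Xb (band x))
    · exact ⟨Dp (band x) (par (band x) (B ∩ Xb (band x))),
        hDin _ _ (hpar1 _ _ hab) (hparnabs _ _ hPp hab),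
        Or.inr ⟨B ∩ Xb (band x), ⟨hPp, hab, rfl⟩, hxP⟩⟩
    · refine ⟨Dp (band x - 1) (B ∩ Xb (band x)), ?_, Or.inl hxP⟩
      have he : band x - 1 + 1 = band x := by ring
      exact hDin (band x - 1) _ (by rw [he]; exact hPp) (by rw [he]; exact hab)
  have hDloc : ∀ (k : ℤ) P, P ∈ pieces (k+1) → ∀ x₀ ∈ P, ∀ z ∈ Dp k P,
      dist z x₀ ≤ c*(a*Λ^(k+1)) + a*Λ^k + c*(a*Λ^k) := by
    intro k P hP x₀ hx₀ z hz
    have hk := hzpos k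
    have hk1 := hzpos (k+1)
    rcases hz with hzP | ⟨Q, ⟨hQp, hQab, hQpar⟩, hzQ⟩
    · have := hpiecedist _ _ hP z hzP x₀ hx₀
      nlinarith [mul_pos hapos hk, mul_pos hcpos (mul_pos hapos hk)]
    · obtain ⟨q₁, hq₁, m₁, hm₁, hd⟩ := hpar2 k Q hQab
      rw [hQpar] at hm₁
      have h1 : dist z q₁ ≤ c*(a*Λ^k) := hpiecedist _ _ hQp z hzQ q₁ hq₁
      have h2 : dist m₁ x₀ ≤ c*(a*Λ^(k+1)) := hpiecedist _ _ hP m₁ hm₁ x₀ hx₀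
      calc dist z x₀ ≤ dist z q₁ + dist q₁ m₁ + dist m₁ x₀ := dist_triangle4 z q₁ m₁ x₀
        _ ≤ c*(a*Λ^(k+1)) + a*Λ^k + c*(a*Λ^k) := by linarith
  have hDim : ∀ D' ∈ 𝓓, ∀ z ∈ D', ∀ w ∈ D', dist (f z) (f w) ≤ δ * s := by
    intro D' hD' z hz w hw
    obtain ⟨k, P, hP, hnab, rfl⟩ := hD'
    obtain ⟨x₀, hx₀⟩ := hpiecene _ _ hP
    have hk := hzpos k
    have hk1 := hzpos (k+1)
    have e2 : Λ^(k+1) = Λ^k*Λ := hzsucc _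
    have hloc : ∀ z' ∈ Dp k P, dist z' x₀ < (2*c+2)*(a*Λ^(k+1)) := by
      intro z' hz'
      have := hDloc k P hP x₀ hx₀ z' hz'
      rw [e2] at this ⊢
      nlinarith [mul_pos hapos hk, hΛ4, hcpos]
    have hrR : (2*c+2)*(a*Λ^(k+1)) < R x₀ := by
      have hlow := hRlow _ _ hP x₀ hx₀
      nlinarith [hk1]
    exact hΦ x₀ _ hrR z w (hloc z hz) (hloc w hw)

  have hε128 : ε ≤ 1/128 := by nlinarith
  have hGnn : ∀ j : ℤ, (0:ℝ) ≤ (c+1)*(a*Λ^j) := by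
    intro j
    have := mul_pos hapos (hzpos j)
    nlinarith
  -- multiplicity in X for relatively-small sets
  have hmult : ∀ E : Set X, E.Nonempty → (∀ u ∈ E, ∀ v ∈ E, dist u v ≤ ε * R u) →
      ∃ T : Finset (Set X), T.card ≤ n + 1 ∧ ∀ D' ∈ 𝓓, (D' ∩ E).Nonempty → D' ∈ T := by
    intro E hEne hE
    obtain ⟨u₁, hu₁⟩ := hEne
    have hbb : ∀ v ∈ E, band u₁ - 1 ≤ band v := by
      intro v hv
      have h1 : dist u₁ v ≤ ε * R u₁ := hE u₁ hu₁ v hv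
      have h2 : R u₁ ≤ R v + dist u₁ v := hRlip u₁ v
      have h3 : Λ^(band u₁) ≤ R u₁ := hband1 u₁
      have h4 : Λ^(band u₁ - 1) * Λ = Λ^(band u₁) := by
        rw [← hzsucc (band u₁ - 1)]
        congr 1
        ring
      have hbpos := hzpos (band u₁ - 1)
      have hRu := hRpos u₁
      have hscal : 1 ≤ (1-ε)*Λ := by nlinarith
      have h6 : (1-ε) * R u₁ ≤ R v := by nlinarith
      have h7 : Λ^(band u₁ - 1) * ((1-ε)*Λ) ≤ (1-ε) * R u₁ := by
        have h8 := mul_le_mul_of_nonneg_left h3 (by linarith : (0:ℝ) ≤ 1-ε)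
        nlinarith [h4]
      have h5 : Λ^(band u₁ - 1) ≤ R v := by
        have h9 := mul_le_mul_of_nonneg_left hscal hbpos.le
        rw [mul_one] at h9
        linarith
      exact hbandge v _ h5
    obtain ⟨k, ⟨u₀, hu₀E, hu₀b⟩, hkmin⟩ := Int.exists_least_of_bdd
      (P := fun j => ∃ v ∈ E, band v = j)
      ⟨band u₁ - 1, fun j hj => by obtain ⟨v, hv, hvb⟩ := hj; rw [← hvb]; exact hbb v hv⟩
      ⟨band u₁, u₁, hu₁, rfl⟩
    have hkmin' : ∀ v ∈ E, k ≤ band v := fun v hv => hkmin _ ⟨v, hv, rfl⟩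
    have hRu₀ : R u₀ < Λ^(k+1) := by rw [← hu₀b]; exact hband2 u₀
    have hk := hzpos k
    have hk1 := hzpos (k+1)
    have e2 : Λ^(k+1) = Λ^k*Λ := hzsucc _
    have e3 : Λ^(k+1+1) = Λ^(k+1)*Λ := hzsucc _
    have hEd : ∀ u ∈ E, ∀ v ∈ E, dist u v ≤ a*Λ^k/2 := by
      intro u hu v hv
      have h1 := hE u hu v hv
      have h3 : dist u₀ u ≤ ε * R u₀ := hE u₀ hu₀E u hu
      have hRu : R u ≤ (1+ε) * R u₀ := by
        have hl := hRlip u u₀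
        rw [dist_comm u u₀] at hl
        linarith
      have t1 : ε * R u ≤ ε * ((1+ε)*R u₀) := mul_le_mul_of_nonneg_left hRu hεpos.le
      have t2 : ε * ((1+ε)*R u₀) ≤ 2*ε*R u₀ := by
        nlinarith [mul_nonneg (mul_nonneg (by linarith : (0:ℝ) ≤ 1-ε) hεpos.le) (hRpos u₀).le]
      have t3 : 2*ε*R u₀ ≤ 2*ε*Λ^(k+1) := by
        have := mul_le_mul_of_nonneg_left hRu₀.le (by linarith : (0:ℝ) ≤ 2*ε)
        linarith
      have heq2 : 2*ε*Λ^(k+1) = a*Λ^k/2 := by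
        rw [e2]
        linear_combination (Λ^k/2) * hεeq
      linarith
    have hEb : ∀ v ∈ E, band v = k ∨ band v = k+1 := by
      intro v hv
      have h1 := hkmin' v hv
      have h2 : R v < Λ^(k+1+1) := by
        have h3 : dist v u₀ ≤ a*Λ^k/2 := hEd v hv u₀ hu₀E
        have h4 := hRlip v u₀
        rw [e3, e2]
        rw [e2] at hRu₀
        nlinarith [hk, ha8, hΛ4, hapos]
      have := hbandlt v _ h2
      omega
    have hwit : ∀ (k' : ℤ) (G : Set X) (g : Set X → Set X),
        EMetric.diam G ≤ ENNReal.ofReal (a*Λ^k') →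
        (∀ D' ∈ 𝓓, (D' ∩ E).Nonempty → ∃ B ∈ 𝓑 k', (B ∩ G).Nonempty ∧ g B = D') →
        ∃ T : Finset (Set X), T.card ≤ n + 1 ∧ ∀ D' ∈ 𝓓, (D' ∩ E).Nonempty → D' ∈ T := by
      intro k' G g hG hassign
      obtain ⟨T₁, hT₁c, hT₁⟩ := hB3 k' G hG
      refine ⟨T₁.image g, le_trans Finset.card_image_le hT₁c, fun D' hD' hne => ?_⟩
      obtain ⟨B, hB, hBG, hgB⟩ := hassign D' hD' hne
      exact Finset.mem_image.2 ⟨B, hT₁ B hB hBG, hgB⟩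
    by_cases hα : ∃ M ∈ pieces (k+1), (M ∩ E).Nonempty
    · obtain ⟨M₀, hM₀, v₀, hv₀M, hv₀E⟩ := hα
      refine hwit (k+1) {x | ∃ e ∈ E, dist x e ≤ (c+1)*(a*Λ^k)}
        (fun B => if hb : Ab (k+1) (B ∩ Xb (k+1)) then Dp (k+1) (par (k+1) (B ∩ Xb (k+1)))
          else Dp k (B ∩ Xb (k+1))) ?_ ?_
      · apply ediam_le_ofReal_of_dist_le
        rintro x ⟨e₁, he₁, hd₁⟩ y ⟨e₂, he₂, hd₂⟩
        have h3 := hEd e₁ he₁ e₂ he₂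
        have htr : dist x y ≤ dist x e₁ + dist e₁ e₂ + dist e₂ y := dist_triangle4 _ _ _ _
        rw [dist_comm e₂ y] at htr
        rw [e2]
        nlinarith [hk, hΛ2c, hapos, hcpos, mul_pos hapos hk]
      · intro D' hD' hne
        obtain ⟨m, P, hP, hnab, hDeq⟩ := hD'
        obtain ⟨v, hvD, hvE⟩ := hne
        rw [hDeq] at hvD
        rcases hvD with hvP | ⟨Q, ⟨hQp, hQab, hQpar⟩, hvQ⟩
        · have hb1 : band v = m+1 := hpieceband _ _ hP v hvP
          rcases hEb v hvE with hb2 | hb2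
          · exfalso
            have hm : m + 1 = k := by omega
            apply hnab
            rw [hm]
            refine ⟨M₀, hM₀, v, hvP, v₀, hv₀M, ?_⟩
            have := hEd v hvE v₀ hv₀E
            nlinarith [mul_pos hapos hk]
          · obtain rfl : k = m := by omega
            obtain ⟨B, hB, hPB, hPne⟩ := hP
            refine ⟨B, hB, ⟨v, ?_, ⟨v, hvE, by rw [dist_self]; exact hGnn k⟩⟩, ?_⟩
            · rw [hPB] at hvP; exact hvP.1
            · beta_reduce
              rw [← hPB, dif_neg hnab]
              exact hDeq.symm
        · have hb1 : band v = m := hpieceband _ _ hQp v hvQ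
          rcases hEb v hvE with hb2 | hb2
          · obtain rfl : k = m := by omega
            obtain ⟨q₁, hq₁, m₁, hm₁, hd₁⟩ := hpar2 k Q hQab
            rw [hQpar] at hm₁
            obtain ⟨B, hB, hPB, hPne⟩ := hP
            refine ⟨B, hB, ⟨m₁, ?_, ?_⟩, ?_⟩
            · rw [hPB] at hm₁; exact hm₁.1
            · refine ⟨v, hvE, ?_⟩
              have h5 : dist q₁ v ≤ c*(a*Λ^k) := hpiecedist _ _ hQp q₁ hq₁ v hvQ
              have h6 : dist m₁ v ≤ dist m₁ q₁ + dist q₁ v := dist_triangle _ _ _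
              rw [dist_comm m₁ q₁] at h6
              nlinarith
            · beta_reduce
              rw [← hPB, dif_neg hnab]
              exact hDeq.symm
          · obtain rfl : m = k+1 := by omega
            obtain ⟨B, hB, hQB, hQne⟩ := hQp
            refine ⟨B, hB, ⟨v, ?_, ⟨v, hvE, by rw [dist_self]; exact hGnn k⟩⟩, ?_⟩
            · rw [hQB] at hvQ; exact hvQ.1
            · beta_reduce
              rw [← hQB, dif_pos hQab, hQpar]
              exact hDeq.symm
    · push_neg at hα
      refine hwit k E
        (fun B => if hb : Ab k (B ∩ Xb k) then Dp k (par k (B ∩ Xb k))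
          else Dp (k-1) (B ∩ Xb k)) ?_ ?_
      · apply ediam_le_ofReal_of_dist_le
        intro u hu v hv
        have := hEd u hu v hv
        nlinarith [mul_pos hapos hk]
      · intro D' hD' hne
        obtain ⟨m, P, hP, hnab, hDeq⟩ := hD'
        obtain ⟨v, hvD, hvE⟩ := hne
        rw [hDeq] at hvD
        rcases hvD with hvP | ⟨Q, ⟨hQp, hQab, hQpar⟩, hvQ⟩
        · have hb1 : band v = m+1 := hpieceband _ _ hP v hvP
          rcases hEb v hvE with hb2 | hb2
          · have hm : m = k - 1 := by omega
            subst hm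
            have hre : k - 1 + 1 = k := by ring
            rw [hre] at hP hnab
            obtain ⟨B, hB, hPB, hPne⟩ := hP
            refine ⟨B, hB, ⟨v, ?_, hvE⟩, ?_⟩
            · rw [hPB] at hvP; exact hvP.1
            · beta_reduce
              rw [← hPB, dif_neg hnab]
              exact hDeq.symm
          · exfalso
            obtain rfl : k = m := by omega
            have h0 : (P ∩ E).Nonempty := ⟨v, hvP, hvE⟩
            rw [hα P hP] at h0
            exact not_nonempty_empty h0
        · have hb1 : band v = m := hpieceband _ _ hQp v hvQ
          rcases hEb v hvE with hb2 | hb2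
          · obtain rfl : k = m := by omega
            obtain ⟨B, hB, hQB, hQne⟩ := hQp
            refine ⟨B, hB, ⟨v, ?_, hvE⟩, ?_⟩
            · rw [hQB] at hvQ; exact hvQ.1
            · beta_reduce
              rw [← hQB, dif_pos hQab, hQpar]
              exact hDeq.symm
          · exfalso
            obtain rfl : m = k+1 := by omega
            have h0 : (Q ∩ E).Nonempty := ⟨v, hvQ, hvE⟩
            rw [hα Q hQp] at h0
            exact not_nonempty_empty h0
  -- assemble the covering of Y
  refine ⟨{C | ∃ D' ∈ 𝓓, C = f '' D'}, ?_, ?_, ?_⟩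
  · apply eq_univ_of_forall
    intro y
    obtain ⟨x, rfl⟩ := hfs y
    obtain ⟨D', hD', hxD⟩ := hcover x
    exact ⟨f '' D', ⟨D', hD', rfl⟩, mem_image_of_mem f hxD⟩
  · rintro C ⟨D', hD', rfl⟩
    apply ediam_le_ofReal_of_dist_le
    rintro u ⟨z, hz, rfl⟩ v ⟨w, hw, rfl⟩
    exact hDim D' hD' z hz w hw
  · intro EY hEY
    by_cases hne : EY.Nonempty
    · have hEne : (f ⁻¹' EY).Nonempty := by
        obtain ⟨y, hy⟩ := hne
        obtain ⟨x, rfl⟩ := hfs y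
        exact ⟨x, hy⟩
      have hEsmall : ∀ u ∈ f ⁻¹' EY, ∀ v ∈ f ⁻¹' EY, dist u v ≤ ε * R u := by
        intro u hu v hv
        exact hPull u v (dist_le_of_ediam_le' hs.le hEY hu hv)
      obtain ⟨T, hTc, hT⟩ := hmult _ hEne hEsmall
      refine ⟨T.image (fun D => f '' D), le_trans Finset.card_image_le hTc, ?_⟩
      rintro C ⟨D', hD', rfl⟩ ⟨y, ⟨z, hzD, rfl⟩, hyE⟩
      exact Finset.mem_image.2 ⟨D', hT D' hD' ⟨z, hzD, hyE⟩, rfl⟩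
    · refine ⟨∅, by simp, ?_⟩
      intro B hB hBE
      exfalso
      rw [not_nonempty_iff_eq_empty] at hne
      rw [hne] at hBE
      simp at hBE



theorem nagataDim_quasisymmetry_invariant {X Y : Type*} [MetricSpace X] [MetricSpace Y]
    (f : X → Y) (hbij : Function.Bijective f)
    (η : ℝ → ℝ) (hη0 : η 0 = 0) (hηc : ContinuousOn η (Ici 0))
    (hηm : StrictMonoOn η (Ici 0)) (hηs : η '' Ici 0 = Ici 0)
    (hqs : ∀ (x x' z : X) (t : ℝ), 0 < t →
      dist x z ≤ t * dist x' z → dist (f x) (f z) ≤ η t * dist (f x') (f z)) :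
    nagataDim X = nagataDim Y := by
  -- basic properties of η
  have hηpos : ∀ t : ℝ, 0 < t → 0 < η t := by
    intro t ht
    have := hηm (mem_Ici.2 (le_refl 0)) (mem_Ici.2 ht.le) ht
    rwa [hη0] at this
  have hηsmall : ∀ K : ℝ, 0 < K → ∃ t : ℝ, 0 < t ∧ η t ≤ K := by
    intro K hK
    have hmem : K / 2 ∈ η '' Ici 0 := by rw [hηs]; exact mem_Ici.2 (by linarith)
    obtain ⟨t, ht0, htK⟩ := hmem
    have htpos : 0 < t := by
      rcases lt_or_eq_of_le (mem_Ici.1 ht0) with h | h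
      · exact h
      · exfalso; rw [← h, hη0] at htK; linarith
    exact ⟨t, htpos, by linarith⟩
  -- the inverse map
  obtain ⟨g, hgf, hfg⟩ := Function.bijective_iff_has_inverse.1 hbij
  have hgi : Function.Injective g := fun a b hab => by rw [← hfg a, hab, hfg]
  have hgs : Function.Surjective g := fun x => ⟨f x, hgf x⟩
  -- inverse of η
  have hηinv : ∀ y : ℝ, 0 ≤ y → ∃ x : ℝ, 0 ≤ x ∧ η x = y := by
    intro y hy
    have : y ∈ η '' Ici 0 := by rw [hηs]; exact mem_Ici.2 hy
    obtain ⟨x, hx, hxy⟩ := this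
    exact ⟨x, mem_Ici.1 hx, hxy⟩
  choose ι hι0 hιη using hηinv
  -- inverse control function
  set θ' : ℝ → ℝ := fun t => if ht : 0 < t then 1 / ι (1/t) (by positivity) else 0 with hθ'
  have hθ'pos : ∀ t : ℝ, 0 < t → 0 < θ' t := by
    intro t ht
    have h1t : (0:ℝ) < 1/t := by positivity
    have hιpos : 0 < ι (1/t) h1t.le := by
      rcases lt_or_eq_of_le (hι0 (1/t) h1t.le) with h | h
      · exact h
      · exfalso
        have := hιη (1/t) h1t.le
        rw [← h, hη0] at this; linarith
    simp only [hθ', dif_pos ht]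
    positivity
  have hθ'small : ∀ K : ℝ, 0 < K → ∃ t : ℝ, 0 < t ∧ θ' t ≤ K := by
    intro K hK
    have hKinv : (0:ℝ) < 1/K := by positivity
    have hη1K : 0 < η (1/K) := hηpos _ hKinv
    refine ⟨1 / (2 * η (1/K)), by positivity, ?_⟩
    have ht : (0:ℝ) < 1 / (2 * η (1/K)) := by positivity
    have h1t : 1 / (1 / (2 * η (1/K))) = 2 * η (1/K) := by
      rw [one_div_one_div]
    simp only [hθ', dif_pos ht]
    -- show 1 / ι (2 η (1/K)) ≤ K, i.e. ι > 1/K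
    have harg : (0:ℝ) ≤ 1 / (1 / (2 * η (1/K))) := by positivity
    set w := ι (1 / (1 / (2 * η (1/K)))) harg with hw
    have hηw : η w = 1 / (1 / (2 * η (1/K))) := hιη _ harg
    have hηw' : η w = 2 * η (1/K) := by rw [hηw, h1t]
    have hwK : 1/K < w := by
      by_contra hcon
      push_neg at hcon
      have := hηm.monotoneOn (mem_Ici.2 (hι0 _ harg)) (mem_Ici.2 hKinv.le) hcon
      rw [hηw'] at this; linarith
    have hwpos : 0 < w := lt_trans hKinv hwK
    rw [div_le_iff₀ hwpos]
    rw [div_lt_iff₀ hK] at hwK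
    nlinarith
  -- quasisymmetry of the inverse
  have hqs' : ∀ (u u' w : Y) (t : ℝ), 0 < t →
      dist u w ≤ t * dist u' w → dist (g u) (g w) ≤ θ' t * dist (g u') (g w) := by
    intro u u' w t ht huw
    by_contra hcon
    push_neg at hcon
    have hθ't : 0 < θ' t := hθ'pos t ht
    have hxz : 0 < dist (g u) (g w) :=
      lt_of_le_of_lt (by positivity) hcon
    have hguw : g u ≠ g w := by
      intro hh; rw [hh] at hxz; simp at hxz
    have huw' : u ≠ w := fun hh => hguw (by rw [hh])
    have hduw : 0 < dist u w := dist_pos.2 huw'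
    have hx'z : 0 < dist (g u') (g w) := by
      rcases eq_or_lt_of_le (dist_nonneg (x := g u') (y := g w)) with h | h
      · exfalso
        have hgeq : g u' = g w := dist_le_zero.1 h.symm.le
        have hu'w : u' = w := by rw [← hfg u', hgeq, hfg]
        rw [hu'w, dist_self, mul_zero] at huw
        linarith
      · exact h
    -- τ = ι(1/t)
    have h1t : (0:ℝ) < 1/t := by positivity
    set τ := ι (1/t) h1t.le with hτ
    have hητ : η τ = 1/t := hιη _ h1t.le
    have hθ'eq : θ' t = 1/τ := by simp only [hθ', dif_pos ht]; rfl
    have hτpos : 0 < τ := by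
      rcases lt_or_eq_of_le (hι0 (1/t) h1t.le) with h | h
      · exact h
      · exfalso; rw [hτ, ← h, hη0] at hητ; 
        have : (0:ℝ) < 1/t := h1t
        rw [← hητ] at this; simp at this
    -- from hcon : θ' t * dist (g u') (g w) < dist (g u) (g w)
    have hlt : dist (g u') (g w) < τ * dist (g u) (g w) := by
      rw [hθ'eq] at hcon
      have h2 := mul_lt_mul_of_pos_left hcon hτpos
      calc dist (g u') (g w) = τ * (1/τ * dist (g u') (g w)) := by field_simp
        _ < τ * dist (g u) (g w) := h2
    set τ' := dist (g u') (g w) / dist (g u) (g w) with hτ'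
    have hτ'pos : 0 < τ' := by positivity
    have hτ'lt : τ' < τ := by
      rw [hτ', div_lt_iff₀ hxz]; nlinarith
    have happ : dist (g u') (g w) ≤ τ' * dist (g u) (g w) := by
      rw [hτ', div_mul_cancel₀]
      exact ne_of_gt hxz
    have := hqs (g u') (g u) (g w) τ' hτ'pos happ
    rw [hfg, hfg, hfg] at this
    have hη'' : η τ' < 1/t := by
      rw [← hητ]
      exact hηm (mem_Ici.2 hτ'pos.le) (mem_Ici.2 hτpos.le) hτ'lt
    have hfin : dist u w < dist u w := by
      calc dist u w ≤ t * dist u' w := huw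
        _ ≤ t * (η τ' * dist u w) := by
            apply mul_le_mul_of_nonneg_left this ht.le
        _ < t * (1/t * dist u w) := by
            apply mul_lt_mul_of_pos_left _ ht
            exact mul_lt_mul_of_pos_right hη'' hduw
        _ = dist u w := by field_simp
    exact lt_irrefl _ hfin
  -- conclude
  have hiff : ∀ n : ℕ, NagataProp X n ↔ NagataProp Y n := by
    intro n
    constructor
    · exact nagata_transfer f hbij.1 hbij.2 η hηpos hηsmall hqs n
    · exact nagata_transfer g hgi hgs θ' hθ'pos hθ'small hqs' n
  unfold nagataDim
  congr 1
  ext k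
  simp only [mem_setOf_eq]
  exact exists_congr fun n => and_congr_right fun _ => hiff n
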